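/- arXiv:1309.5232 — 2 statements merged into one kernel-verified Lean document; each statement's English description precedes it below -/
import Mathlib

section
/- Let σ : ℝ → ℝ be bounded, continuously differentiable with bounded Lipschitz derivative, and let φ(x,v) be the flow of the ODE dy/dx = σ(y), φ(0,v) = v. Then the partial derivative of φ with respect to the initial value v satisfies ∂_v φ(x,v) = exp(∫₀ˣ σ'(φ(y,v)) dy). -/
open Real Filter Asymptotics Set

/-- Key lemma: the statement for `x ≥ 0`. -/
lemma flow_deriv_key (σ : ℝ → ℝ) (M' : ℝ) (K : NNReal)
    (hC1 : ContDiff ℝ 1 σ)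
    (hdbdd : ∀ x, |deriv σ x| ≤ M')
    (hdlip : LipschitzWith K (deriv σ))
    (φ : ℝ → ℝ → ℝ)
    (hφ0 : ∀ v : ℝ, φ 0 v = v)
    (hφ : ∀ v x : ℝ, HasDerivAt (fun x' => φ x' v) (σ (φ x v)) x)
    (x : ℝ) (hx : 0 ≤ x) (v : ℝ) :
    HasDerivAt (fun v' => φ x v')
      (Real.exp (∫ y in (0:ℝ)..x, deriv σ (φ y v))) v := by
  have hM'0 : 0 ≤ M' := le_trans (abs_nonneg _) (hdbdd 0)
  have hσdiff : Differentiable ℝ σ := hC1.differentiable one_ne_zero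
  have hcont' : Continuous (deriv σ) := hdlip.continuous
  -- σ is M'-Lipschitz
  have hσL : ∀ a b : ℝ, |σ b - σ a| ≤ M' * |b - a| := by
    intro a b
    have := (convex_univ : Convex ℝ (univ : Set ℝ)).norm_image_sub_le_of_norm_hasDerivWithin_le
      (f := σ) (f' := deriv σ)
      (fun y _ => (hσdiff y).hasDerivAt.hasDerivWithinAt)
      (fun y _ => by simpa using hdbdd y) (mem_univ a) (mem_univ b)
    simpa [Real.norm_eq_abs] using this
  -- Taylor-type estimate from the Lipschitz derivative
  have hT : ∀ a b : ℝ, |σ b - σ a - deriv σ a * (b - a)| ≤ K * |b - a| ^ 2 := by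
    intro a b
    have hderiv : ∀ y ∈ uIcc a b,
        HasDerivWithinAt (fun z => σ z - deriv σ a * z) (deriv σ y - deriv σ a) (uIcc a b) y := by
      intro y _
      exact ((hσdiff y).hasDerivAt.sub (((hasDerivAt_id y).const_mul (deriv σ a)).congr_deriv
        (by ring))).hasDerivWithinAt
    have hbound : ∀ y ∈ uIcc a b, ‖deriv σ y - deriv σ a‖ ≤ (K : ℝ) * |b - a| := by
      intro y hy
      have h1 : |deriv σ y - deriv σ a| ≤ (K : ℝ) * |y - a| := by
        have := hdlip.dist_le_mul y a
        simpa [Real.dist_eq] using this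
      have h2 : |y - a| ≤ |b - a| := abs_sub_left_of_mem_uIcc hy
      calc ‖deriv σ y - deriv σ a‖ = |deriv σ y - deriv σ a| := rfl
        _ ≤ (K : ℝ) * |y - a| := h1
        _ ≤ (K : ℝ) * |b - a| := by
            exact mul_le_mul_of_nonneg_left h2 (K.coe_nonneg)
    have := (convex_uIcc a b).norm_image_sub_le_of_norm_hasDerivWithin_le hderiv hbound
      left_mem_uIcc right_mem_uIcc
    have h3 : (σ b - deriv σ a * b) - (σ a - deriv σ a * a) = σ b - σ a - deriv σ a * (b - a) := by
      ring
    rw [Real.norm_eq_abs, Real.norm_eq_abs, h3] at this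
    calc |σ b - σ a - deriv σ a * (b - a)| ≤ (K : ℝ) * |b - a| * |b - a| := this
      _ = (K : ℝ) * |b - a| ^ 2 := by ring
  have hcφ : ∀ w, Continuous (fun t => φ t w) := fun w =>
    continuous_iff_continuousAt.2 fun t => (hφ w t).continuousAt
  -- Lipschitz dependence on the initial condition (Grönwall)
  have hlip : ∀ w : ℝ, ∀ t ∈ Icc (0:ℝ) x, |φ t w - φ t v| ≤ |w - v| * Real.exp (M' * t) := by
    intro w t ht
    have := norm_le_gronwallBound_of_norm_deriv_right_le
      (f := fun t => φ t w - φ t v) (f' := fun t => σ (φ t w) - σ (φ t v))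
      (δ := |w - v|) (K := M') (ε := 0) (a := 0) (b := x)
      (((hcφ w).sub (hcφ v)).continuousOn)
      (fun s _ => (((hφ w s).sub (hφ v s))).hasDerivWithinAt)
      (by simp [hφ0]) (fun s _ => by
        simpa [Real.norm_eq_abs] using hσL (φ s v) (φ s w))
      t ht
    simpa [Real.norm_eq_abs, gronwallBound_ε0] using this
  -- the function E
  set g : ℝ → ℝ := fun t => ∫ y in (0:ℝ)..t, deriv σ (φ y v) with hg
  set E : ℝ → ℝ := fun t => Real.exp (g t) with hE
  have hgc : Continuous fun y => deriv σ (φ y v) := hcont'.comp (hcφ v)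
  have hgd : ∀ t, HasDerivAt g (deriv σ (φ t v)) t := by
    intro t
    exact intervalIntegral.integral_hasDerivAt_right
      (hgc.intervalIntegrable _ _)
      (hgc.stronglyMeasurableAtFilter _ _) hgc.continuousAt
  have hEd : ∀ t, HasDerivAt E (deriv σ (φ t v) * E t) t := by
    intro t
    simpa [hE, mul_comm] using (hgd t).exp
  have hE0 : E 0 = 1 := by simp [hE, hg]
  have hEbd : ∀ t ∈ Icc (0:ℝ) x, E t ≤ Real.exp (M' * x) := by
    intro t ht
    have h1 : ‖∫ y in (0:ℝ)..t, deriv σ (φ y v)‖ ≤ M' * |t - 0| :=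
      intervalIntegral.norm_integral_le_of_norm_le_const
        (fun y _ => by simpa [Real.norm_eq_abs] using hdbdd (φ y v))
    rw [Real.norm_eq_abs] at h1
    have h1' : |g t| ≤ M' * |t - 0| := h1
    have h2 : g t ≤ M' * x := by
      have : g t ≤ M' * t := by
        have := (abs_le.1 (by simpa [abs_of_nonneg ht.1] using h1)).2
        exact this
      exact this.trans (mul_le_mul_of_nonneg_left ht.2 hM'0)
    exact Real.exp_le_exp.2 h2
  -- quadratic remainder estimate
  set C : ℝ := (K : ℝ) * Real.exp (M' * x) ^ 2 * Real.exp ((M' + 1) * x) with hC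
  have hC0 : 0 ≤ C := by positivity
  have hmain : ∀ w : ℝ, |φ x w - φ x v - (w - v) * E x| ≤ C * |w - v| ^ 2 := by
    intro w
    set ε : ℝ := (K : ℝ) * Real.exp (M' * x) ^ 2 * |w - v| ^ 2 with hε
    have hε0 : 0 ≤ ε := by positivity
    have hEcont : Continuous E := Real.continuous_exp.comp
      (continuous_iff_continuousAt.2 fun t => (hgd t).continuousAt)
    have hfc : ContinuousOn (fun t => φ t w - φ t v - (w - v) * E t) (Icc 0 x) :=
      (((hcφ w).sub (hcφ v)).sub (continuous_const.mul hEcont)).continuousOn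
    have hfd : ∀ s ∈ Ico (0:ℝ) x,
        HasDerivWithinAt (fun t => φ t w - φ t v - (w - v) * E t)
          ((fun t => σ (φ t w) - σ (φ t v) - (w - v) * (deriv σ (φ t v) * E t)) s)
          (Ici s) s :=
      fun s _ => (((hφ w s).sub (hφ v s)).sub ((hEd s).const_mul (w - v))).hasDerivWithinAt
    have hf0 : ‖φ 0 w - φ 0 v - (w - v) * E 0‖ ≤ 0 := by simp [hφ0, hE0]
    have hbd : ∀ s ∈ Ico (0:ℝ) x,
        ‖(fun t => σ (φ t w) - σ (φ t v) - (w - v) * (deriv σ (φ t v) * E t)) s‖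
          ≤ (M' + 1) * ‖(fun t => φ t w - φ t v - (w - v) * E t) s‖ + ε := by
      intro s hs
      have hs' : s ∈ Icc (0:ℝ) x := ⟨hs.1, le_of_lt hs.2⟩
      have hΔ : |φ s w - φ s v| ≤ |w - v| * Real.exp (M' * x) := by
        refine (hlip w s hs').trans ?_
        exact mul_le_mul_of_nonneg_left
          (Real.exp_le_exp.2 (mul_le_mul_of_nonneg_left hs'.2 hM'0)) (abs_nonneg _)
      have hsplit : σ (φ s w) - σ (φ s v) - (w - v) * (deriv σ (φ s v) * E s)
          = (σ (φ s w) - σ (φ s v) - deriv σ (φ s v) * (φ s w - φ s v))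
            + deriv σ (φ s v) * (φ s w - φ s v - (w - v) * E s) := by ring
      simp only [Real.norm_eq_abs]
      rw [hsplit]
      refine (abs_add_le _ _).trans ?_
      have h1 : |σ (φ s w) - σ (φ s v) - deriv σ (φ s v) * (φ s w - φ s v)| ≤ ε := by
        refine (hT (φ s v) (φ s w)).trans ?_
        rw [hε]
        have hsq : |φ s w - φ s v| ^ 2 ≤ (|w - v| * Real.exp (M' * x)) ^ 2 :=
          pow_le_pow_left₀ (abs_nonneg _) hΔ 2
        calc (K : ℝ) * |φ s w - φ s v| ^ 2
            ≤ (K : ℝ) * (|w - v| * Real.exp (M' * x)) ^ 2 :=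
              mul_le_mul_of_nonneg_left hsq K.coe_nonneg
          _ = (K : ℝ) * Real.exp (M' * x) ^ 2 * |w - v| ^ 2 := by ring
      have h2 : |deriv σ (φ s v) * (φ s w - φ s v - (w - v) * E s)|
          ≤ (M' + 1) * |φ s w - φ s v - (w - v) * E s| := by
        rw [abs_mul]
        exact mul_le_mul_of_nonneg_right ((hdbdd _).trans (by linarith)) (abs_nonneg _)
      linarith
    have key := norm_le_gronwallBound_of_norm_deriv_right_le hfc hfd hf0 hbd x ⟨hx, le_rfl⟩
    have hKne : (M' + 1) ≠ 0 := by linarith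
    have hgb : gronwallBound 0 (M' + 1) ε (x - 0) ≤ ε * Real.exp ((M' + 1) * x) := by
      rw [gronwallBound_of_K_ne_0 hKne]
      have h1 : ε / (M' + 1) ≤ ε := by
        apply div_le_self hε0; linarith
      have h2 : Real.exp ((M' + 1) * x) - 1 ≤ Real.exp ((M' + 1) * x) := by linarith
      have h3 : (0:ℝ) ≤ Real.exp ((M' + 1) * x) - 1 := by
        have : (1:ℝ) ≤ Real.exp ((M' + 1) * x) := Real.one_le_exp (by positivity)
        linarith
      calc 0 * Real.exp ((M' + 1) * (x - 0)) + ε / (M' + 1) * (Real.exp ((M' + 1) * (x - 0)) - 1)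
          = ε / (M' + 1) * (Real.exp ((M' + 1) * x) - 1) := by ring_nf
        _ ≤ ε * (Real.exp ((M' + 1) * x) - 1) := mul_le_mul_of_nonneg_right h1 h3
        _ ≤ ε * Real.exp ((M' + 1) * x) := mul_le_mul_of_nonneg_left h2 hε0
    have hfin := key.trans hgb
    rw [Real.norm_eq_abs] at hfin
    calc |φ x w - φ x v - (w - v) * E x| ≤ ε * Real.exp ((M' + 1) * x) := hfin
      _ = C * |w - v| ^ 2 := by rw [hε, hC]; ring
  -- conclude
  rw [show Real.exp (∫ y in (0:ℝ)..x, deriv σ (φ y v)) = E x from rfl,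
    hasDerivAt_iff_isLittleO]
  rw [isLittleO_iff]
  intro c hc
  rw [Metric.eventually_nhds_iff]
  refine ⟨c / (C + 1), by positivity, fun w hw => ?_⟩
  have hwv : |w - v| ≤ c / (C + 1) := le_of_lt (by simpa [Real.dist_eq] using hw)
  have := hmain w
  rw [Real.norm_eq_abs, Real.norm_eq_abs]
  have hstep : C * |w - v| ^ 2 ≤ c * |w - v| := by
    have h1 : C * |w - v| ≤ C * (c / (C + 1)) := mul_le_mul_of_nonneg_left hwv hC0
    have h2 : C * (c / (C + 1)) ≤ c := by
      rw [mul_div_assoc', div_le_iff₀ (by positivity : (0:ℝ) < C + 1)]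
      nlinarith
    calc C * |w - v| ^ 2 = (C * |w - v|) * |w - v| := by ring
      _ ≤ (C * (c / (C + 1))) * |w - v| := mul_le_mul_of_nonneg_right h1 (abs_nonneg _)
      _ ≤ c * |w - v| := mul_le_mul_of_nonneg_right h2 (abs_nonneg _)
  calc |φ x w - φ x v - (w - v) • E x| = |φ x w - φ x v - (w - v) * E x| := by norm_num
    _ ≤ C * |w - v| ^ 2 := hmain w
    _ ≤ c * |w - v| := hstep

/-- For σ ∈ C¹_{b,lip}(ℝ) and φ the flow of `dy/dx = σ(y)`, `φ(0,v) = v`,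
the derivative of the flow in the initial value satisfies
`∂_v φ(x,v) = exp(∫₀ˣ σ'(φ(y,v)) dy)`. -/
theorem stmt_1 (σ : ℝ → ℝ) (M M' : ℝ) (K : NNReal)
    (hbdd : ∀ x, |σ x| ≤ M)
    (hC1 : ContDiff ℝ 1 σ)
    (hdbdd : ∀ x, |deriv σ x| ≤ M')
    (hdlip : LipschitzWith K (deriv σ))
    (φ : ℝ → ℝ → ℝ)
    (hφ0 : ∀ v : ℝ, φ 0 v = v)
    (hφ : ∀ v x : ℝ, HasDerivAt (fun x' => φ x' v) (σ (φ x v)) x) :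
    ∀ x v : ℝ, HasDerivAt (fun v' => φ x v')
      (Real.exp (∫ y in (0:ℝ)..x, deriv σ (φ y v))) v := by
  intro x v
  rcases le_total 0 x with hx | hx
  · exact flow_deriv_key σ M' K hC1 hdbdd hdlip φ hφ0 hφ x hx v
  · -- time reversal
    set σ₂ : ℝ → ℝ := fun y => -σ y with hσ₂
    set φ₂ : ℝ → ℝ → ℝ := fun t w => φ (-t) w with hφ₂def
    have hd2 : deriv σ₂ = fun y => -deriv σ y := by
      funext y; exact deriv.neg
    have hC1₂ : ContDiff ℝ 1 σ₂ := hC1.neg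
    have hdbdd₂ : ∀ y, |deriv σ₂ y| ≤ M' := by
      intro y; rw [hd2]; simpa using hdbdd y
    have hdlip₂ : LipschitzWith K (deriv σ₂) := by
      rw [hd2]
      exact LipschitzWith.comp (LipschitzWith.id.neg) hdlip |>.weaken (by simp)
    have hφ₂0 : ∀ w : ℝ, φ₂ 0 w = w := by
      intro w; simp [hφ₂def, hφ0]
    have hφ₂' : ∀ w t : ℝ, HasDerivAt (fun t' => φ₂ t' w) (σ₂ (φ₂ t w)) t := by
      intro w t
      have h1 : HasDerivAt (fun t' : ℝ => -t') (-1 : ℝ) t := hasDerivAt_neg t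
      have h2 := (hφ w (-t)).comp t h1
      simpa [hφ₂def, hσ₂, Function.comp_def, mul_comm] using h2
    have key := flow_deriv_key σ₂ M' K hC1₂ hdbdd₂ hdlip₂ φ₂ hφ₂0 hφ₂'
      (-x) (by linarith) v
    have hfun : (fun v' => φ₂ (-x) v') = fun v' => φ x v' := by
      funext v'; simp [hφ₂def]
    have hint : (∫ y in (0:ℝ)..(-x), deriv σ₂ (φ₂ y v))
        = ∫ y in (0:ℝ)..x, deriv σ (φ y v) := by
      have h1 : (∫ y in (0:ℝ)..(-x), deriv σ₂ (φ₂ y v))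
          = ∫ y in (0:ℝ)..(-x), -(deriv σ (φ (-y) v)) := by
        congr 1; funext y; rw [hd2]
      rw [h1, intervalIntegral.integral_neg]
      have h2 : (∫ y in (0:ℝ)..(-x), deriv σ (φ (-y) v))
          = ∫ y in (x : ℝ)..(0:ℝ), deriv σ (φ y v) := by
        simpa using intervalIntegral.integral_comp_neg
          (a := (0:ℝ)) (b := -x) (fun y => deriv σ (φ y v))
      rw [h2, intervalIntegral.integral_symm]
      ring
    rw [hfun, hint] at key
    exact key
end

section
/- (Comparison lemma for ODEs.) Let f, f̃ : ℝ² → ℝ satisfy Carathéodory conditions: measurable in t, continuous in x, and |f(t,x)|, |f̃(t,x)| ≤ m(t) with m locally integrable. Let (t₀, x₀) and (t₀, x̃₀) with x₀ ≤ x̃₀. Suppose x_t solves dx = f(t,x)dt, x_{t₀} = x₀, and x̃_t is the maximal solution of dx̃ = f̃(t,x̃)dt, x̃_{t₀} = x̃₀. If (t − t₀) f(t,x) ≤ (t − t₀) f̃(t,x) for a.e. (t,x) ∈ ℝ², then x_t ≤ x̃_t for every t in the common interval of existence. -/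
open Set MeasureTheory intervalIntegral

namespace Stmt11

open Filter Topology

/-- Carathéodory functions are jointly measurable. -/
lemma meas_uncurry {f : ℝ → ℝ → ℝ} (hmeas : ∀ x : ℝ, Measurable (fun t => f t x))
    (hcont : ∀ t : ℝ, Continuous (f t)) : Measurable (Function.uncurry f) := by
  have h := measurable_uncurry_of_continuous_of_measurable
      (u := fun y t => f t y) (fun t => hcont t) hmeas
  have he : Function.uncurry f = (Function.uncurry fun y t => f t y) ∘ Prod.swap := rfl
  rw [he]
  exact h.comp measurable_swap

lemma intervalIntegrable_m {m : ℝ → ℝ} (hm : LocallyIntegrable m volume) (u v : ℝ) :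
    IntervalIntegrable m volume u v :=
  (hm.integrableOn_isCompact isCompact_uIcc).intervalIntegrable

/-- Interval integrability of a dominated a.e.-measurable function. -/
lemma intervalIntegrable_of_bound {m G : ℝ → ℝ} (hm : LocallyIntegrable m volume)
    {a b u v : ℝ} (hsub : uIcc u v ⊆ Icc a b)
    (hG : AEMeasurable G (volume.restrict (Icc a b)))
    (hdomG : ∀ s, |G s| ≤ m s) : IntervalIntegrable G volume u v := by
  have hmi : IntegrableOn m (Icc a b) volume := hm.integrableOn_isCompact isCompact_Icc
  have hGi : IntegrableOn G (Icc a b) volume := by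
    refine Integrable.mono' hmi hG.aestronglyMeasurable ?_
    exact ae_of_all _ (fun s => by simpa [Real.norm_eq_abs] using hdomG s)
  exact (hGi.mono_set hsub).intervalIntegrable

/-- |∫ G| ≤ |∫ m| for |G| ≤ m. -/
lemma abs_integral_le_abs_integral {m G : ℝ → ℝ} {u v : ℝ}
    (hG : IntervalIntegrable G volume u v) (hmI : IntervalIntegrable m volume u v)
    (hdomG : ∀ s, |G s| ≤ m s) :
    |∫ s in u..v, G s| ≤ |∫ s in u..v, m s| := by
  have key : ∀ u v : ℝ, u ≤ v → IntervalIntegrable G volume u v →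
      IntervalIntegrable m volume u v → |∫ s in u..v, G s| ≤ |∫ s in u..v, m s| := by
    intro u v huv hG hmI
    have h1 : |∫ s in u..v, G s| ≤ abs (∫ s in u..v, |G s|) := by
      simpa [Real.norm_eq_abs] using
        intervalIntegral.norm_integral_le_abs_integral_norm (f := G) (a := u) (b := v)
          (μ := volume)
    have h2 : ∫ s in u..v, |G s| ≤ ∫ s in u..v, m s :=
      intervalIntegral.integral_mono_on huv hG.abs hmI (fun s _ => hdomG s)
    have h3 : (0:ℝ) ≤ ∫ s in u..v, |G s| :=
      intervalIntegral.integral_nonneg huv (fun s _ => abs_nonneg _)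
    calc |∫ s in u..v, G s| ≤ abs (∫ s in u..v, |G s|) := h1
      _ = ∫ s in u..v, |G s| := abs_of_nonneg h3
      _ ≤ ∫ s in u..v, m s := h2
      _ ≤ |∫ s in u..v, m s| := le_abs_self _
  rcases le_total u v with h | h
  · exact key u v h hG hmI
  · have := key v u h hG.symm hmI.symm
    rwa [intervalIntegral.integral_symm v u, intervalIntegral.integral_symm v u (f := m),
      abs_neg, abs_neg]

/-- a.e. inequality between continuous functions implies inequality everywhere. -/
lemma le_of_ae_le {h₁ h₂ : ℝ → ℝ} (hc₁ : Continuous h₁) (hc₂ : Continuous h₂)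
    (h : ∀ᵐ y : ℝ, h₁ y ≤ h₂ y) : ∀ y, h₁ y ≤ h₂ y := by
  have hcl : IsClosed {y : ℝ | h₁ y ≤ h₂ y} := isClosed_le hc₁ hc₂
  have huniv : {y : ℝ | h₁ y ≤ h₂ y} = univ :=
    hcl.ae_eq_univ_iff_eq (μ := volume).1 (Filter.eventuallyEq_univ.2 h)
  intro y
  have : y ∈ {y : ℝ | h₁ y ≤ h₂ y} := huniv ▸ mem_univ y
  exact this




/-- The delayed time shift: moves `t` towards `t₀` by `d`. -/
noncomputable def rho (t₀ d t : ℝ) : ℝ := max t₀ (t - d) + min t₀ (t + d) - t₀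

lemma rho_right {t₀ d t : ℝ} (hd : 0 ≤ d) (ht : t₀ ≤ t) : rho t₀ d t = max t₀ (t - d) := by
  have h : min t₀ (t + d) = t₀ := min_eq_left (by linarith)
  simp [rho, h]

lemma rho_left {t₀ d t : ℝ} (hd : 0 ≤ d) (ht : t ≤ t₀) : rho t₀ d t = min t₀ (t + d) := by
  have h : max t₀ (t - d) = t₀ := max_eq_left (by linarith)
  unfold rho; rw [h]; ring

lemma rho_t0 {t₀ d : ℝ} (hd : 0 ≤ d) : rho t₀ d t₀ = t₀ := by
  rw [rho_right hd le_rfl]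
  exact max_eq_left (by linarith)

lemma rho_mem {t₀ d t : ℝ} (hd : 0 ≤ d) : rho t₀ d t ∈ uIcc t₀ t := by
  rcases le_total t₀ t with h | h
  · rw [rho_right hd h, uIcc_of_le h]
    exact ⟨le_max_left _ _, max_le h (by linarith)⟩
  · rw [rho_left hd h, uIcc_of_ge h]
    exact ⟨le_min h (by linarith), min_le_left _ _⟩

lemma rho_dist {t₀ d t : ℝ} (k : ℕ) (hd : 0 ≤ d) (ht : |t - t₀| ≤ ((k : ℝ) + 1) * d) :
    |rho t₀ d t - t₀| ≤ (k : ℝ) * d := by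
  have hkd : 0 ≤ (k : ℝ) * d := mul_nonneg (Nat.cast_nonneg k) hd
  have hexp : ((k : ℝ) + 1) * d = (k : ℝ) * d + d := by ring
  rw [abs_le] at ht ⊢
  rcases le_total t₀ t with h | h
  · rw [rho_right hd h]
    constructor
    · linarith [le_max_left t₀ (t - d)]
    · have h2 : t - d ≤ t₀ + (k : ℝ) * d := by linarith [ht.2]
      linarith [max_le (by linarith : t₀ ≤ t₀ + (k:ℝ)*d) h2]
  · rw [rho_left hd h]
    constructor
    · have h2 : t₀ - (k : ℝ) * d ≤ t + d := by linarith [ht.1]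
      linarith [le_min (by linarith : t₀ - (k:ℝ)*d ≤ t₀) h2]
    · linarith [min_le_left t₀ (t + d)]

lemma rho_mono {t₀ d : ℝ} : Monotone (rho t₀ d) := by
  intro u v huv
  have h1 : max t₀ (u - d) ≤ max t₀ (v - d) := max_le_max le_rfl (by linarith)
  have h2 : min t₀ (u + d) ≤ min t₀ (v + d) := min_le_min le_rfl (by linarith)
  simp only [rho]; linarith

lemma rho_lip_aux {t₀ d t t' : ℝ} (hd : 0 ≤ d) (htt : t' ≤ t) :
    rho t₀ d t - rho t₀ d t' ≤ t - t' := by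
  simp only [rho]
  rcases le_total (t + d) t₀ with h1 | h1
  · have e1 : max t₀ (t - d) = t₀ := max_eq_left (by linarith)
    have e2 : max t₀ (t' - d) = t₀ := max_eq_left (by linarith)
    have e3 : min t₀ (t + d) = t + d := min_eq_right h1
    have e4 : min t₀ (t' + d) = t' + d := min_eq_right (by linarith)
    rw [e1, e2, e3, e4]; linarith
  · rcases le_total (t' + d) t₀ with h2 | h2
    · have e2 : max t₀ (t' - d) = t₀ := max_eq_left (by linarith)
      have e4 : min t₀ (t' + d) = t' + d := min_eq_right h2
      rw [e2, e4]
      have hb1 : max t₀ (t - d) ≤ t + d := max_le (by linarith) (by linarith)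
      have hb2 : min t₀ (t + d) ≤ t₀ := min_le_left _ _
      linarith
    · have e3 : min t₀ (t + d) = t₀ := min_eq_left (by linarith)
      have e4 : min t₀ (t' + d) = t₀ := min_eq_left h2
      rw [e3, e4]
      have hb1 : max t₀ (t - d) ≤ max t₀ (t' - d) + (t - t') := by
        apply max_le
        · linarith [le_max_left t₀ (t' - d)]
        · linarith [le_max_right t₀ (t' - d)]
      linarith

lemma rho_lip {t₀ d t t' : ℝ} (hd : 0 ≤ d) : |rho t₀ d t - rho t₀ d t'| ≤ |t - t'| := by
  rcases le_total t' t with h | h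
  · rw [abs_of_nonneg (by linarith [rho_mono (t₀ := t₀) (d := d) h] : (0:ℝ) ≤ rho t₀ d t - rho t₀ d t'),
      abs_of_nonneg (by linarith : (0:ℝ) ≤ t - t')]
    exact rho_lip_aux hd h
  · rw [abs_of_nonpos (by linarith [rho_mono (t₀ := t₀) (d := d) h] : rho t₀ d t - rho t₀ d t' ≤ 0),
      abs_of_nonpos (by linarith : t - t' ≤ 0)]
    linarith [rho_lip_aux (t₀ := t₀) hd h]

lemma rho_cont {t₀ d : ℝ} : Continuous (rho t₀ d) := by
  unfold rho; fun_prop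

lemma rho_near {t₀ d t : ℝ} (hd : 0 ≤ d) : |rho t₀ d t - t| ≤ d := by
  rw [abs_le]
  rcases le_total t₀ t with h | h
  · rw [rho_right hd h]
    exact ⟨by linarith [le_max_right t₀ (t - d)], by linarith [max_le h (by linarith : t - d ≤ t)]⟩
  · rw [rho_left hd h]
    exact ⟨by linarith [le_min (by linarith : t - d ≤ t₀) (by linarith : t - d ≤ t + d)],
      by linarith [min_le_right t₀ (t + d)]⟩


/-- The delayed Picard/Tonelli operator. -/
noncomputable def TT (g : ℝ → ℝ → ℝ) (t₀ c d : ℝ) (h : ℝ → ℝ) (t : ℝ) : ℝ :=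
  c + ∫ s in t₀..rho t₀ d t, g s (h s)

/-- Existence of a global Carathéodory solution on `[a,b]` (Tonelli approximation +
Arzelà–Ascoli). -/
lemma exists_solution (g : ℝ → ℝ → ℝ) (m : ℝ → ℝ) (t₀ a b c : ℝ)
    (hgmeas : Measurable (Function.uncurry g))
    (hgcont : ∀ t, Continuous (g t))
    (hm : LocallyIntegrable m volume)
    (hdomg : ∀ t y, |g t y| ≤ m t)
    (ht₀ : t₀ ∈ Icc a b) :
    ∃ Z : ℝ → ℝ, Continuous Z ∧ ∀ t ∈ Icc a b, Z t = c + ∫ s in t₀..t, g s (Z s) := by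
  obtain ⟨ha, hb⟩ := ht₀
  have hab : a ≤ b := ha.trans hb
  have ht₀' : t₀ ∈ Icc a b := ⟨ha, hb⟩
  have hm0 : ∀ t, 0 ≤ m t := fun t => (abs_nonneg _).trans (hdomg t 0)
  have hsubIcc : ∀ {u v : ℝ}, u ∈ Icc a b → v ∈ Icc a b → uIcc u v ⊆ Icc a b := by
    intro u v hu hv
    rw [← uIcc_of_le hab]
    exact uIcc_subset_uIcc (by rwa [uIcc_of_le hab]) (by rwa [uIcc_of_le hab])
  set L : ℝ := max (b - t₀) (t₀ - a) with hLdef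
  have hL0 : 0 ≤ L := le_trans (by linarith) (le_max_left _ _)
  have habs_le_L : ∀ t ∈ Icc a b, |t - t₀| ≤ L := by
    intro t ht
    rw [abs_le]
    constructor
    · have := le_max_right (b - t₀) (t₀ - a); have h1 := ht.1; simp only [hLdef]; linarith
    · have := le_max_left (b - t₀) (t₀ - a); have h2 := ht.2; simp only [hLdef]; linarith
  -- basic facts about integrands
  have hGmeas : ∀ h : ℝ → ℝ, Continuous h → Measurable fun s => g s (h s) := fun h hh =>
    hgmeas.comp (measurable_id.prodMk hh.measurable)
  have hGint : ∀ h : ℝ → ℝ, Continuous h →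
      ∀ u v : ℝ, IntervalIntegrable (fun s => g s (h s)) volume u v := by
    intro h hh u v
    refine IntegrableOn.intervalIntegrable ?_
    refine Integrable.mono' (hm.integrableOn_isCompact isCompact_uIcc)
      ((hGmeas h hh).aestronglyMeasurable) ?_
    exact ae_of_all _ fun s => by simpa [Real.norm_eq_abs] using hdomg s (h s)
  -- continuity of the operator output
  have hTcont : ∀ d (h : ℝ → ℝ), Continuous h → Continuous (TT g t₀ c d h) := by
    intro d h hh
    unfold TT
    exact continuous_const.add
      ((intervalIntegral.continuous_primitive (hGint h hh) t₀).comp rho_cont)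
  have hIterCont : ∀ d (n : ℕ), Continuous ((TT g t₀ c d)^[n] (fun _ => c)) := by
    intro d n
    induction n with
    | zero => exact continuous_const
    | succ n ih => rw [Function.iterate_succ_apply']; exact hTcont d _ ih
  have hmem_abs : ∀ r s : ℝ, s ∈ uIcc t₀ r → |s - t₀| ≤ |r - t₀| := by
    intro r s hs
    rcases le_total t₀ r with h | h
    · rw [uIcc_of_le h] at hs
      rw [abs_of_nonneg (by linarith [hs.1]), abs_of_nonneg (by linarith)]
      linarith [hs.2]
    · rw [uIcc_of_ge h] at hs
      rw [abs_of_nonpos (by linarith [hs.2]), abs_of_nonpos (by linarith)]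
      linarith [hs.1]
  -- the key stabilization property of the iterates
  have key : ∀ d, 0 ≤ d → ∀ (k : ℕ) (t : ℝ), |t - t₀| ≤ (k : ℝ) * d →
      (TT g t₀ c d)^[k+1] (fun _ => c) t = (TT g t₀ c d)^[k+2] (fun _ => c) t := by
    intro d hd k
    induction k with
    | zero =>
      intro t ht
      have ht0 : t = t₀ := by
        have h1 : |t - t₀| ≤ 0 := by simpa using ht
        have h2 : t - t₀ = 0 := abs_nonpos_iff.1 h1
        linarith
      rw [ht0]
      have hT0 : ∀ X : ℝ → ℝ, TT g t₀ c d X t₀ = c := by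
        intro X
        unfold TT
        rw [rho_t0 hd]
        simp
      simp only [Function.iterate_succ_apply', Function.iterate_zero_apply]
      rw [hT0, hT0]
    | succ k ih =>
      intro t ht
      have hkk : k + 1 + 1 = k + 2 := by omega
      have hkk2 : k + 1 + 2 = k + 2 + 1 := by omega
      rw [hkk2, hkk, Function.iterate_succ_apply' (f := TT g t₀ c d) (n := k + 1),
        Function.iterate_succ_apply' (f := TT g t₀ c d) (n := k + 2)]
      unfold TT
      congr 1
      apply intervalIntegral.integral_congr
      intro s hs
      have h1 : |s - t₀| ≤ |rho t₀ d t - t₀| := hmem_abs _ s hs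
      have h2 : |rho t₀ d t - t₀| ≤ (k : ℝ) * d := by
        apply rho_dist k hd
        push_cast at ht ⊢
        linarith
      rw [hkk]  -- no-op, keep numerals aligned
      exact congrArg (g s) (ih s (h1.trans h2))
  -- approximating sequence
  set dd : ℕ → ℝ := fun N => L / ((N : ℝ) + 1) with hdd
  have hdd0 : ∀ N, 0 ≤ dd N := fun N => div_nonneg hL0 (by positivity)
  set z : ℕ → ℝ → ℝ := fun N => (TT g t₀ c (dd N))^[N + 1 + 1] (fun _ => c) with hzdef
  have hzc : ∀ N, Continuous (z N) := fun N => hIterCont _ _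
  have hzeq : ∀ N, ∀ t ∈ Icc a b, z N t = c + ∫ s in t₀..rho t₀ (dd N) t, g s (z N s) := by
    intro N t ht
    have hL1 : ((N + 1 : ℕ) : ℝ) * dd N = L := by
      simp only [hdd]
      push_cast
      field_simp
    have h1 : |t - t₀| ≤ ((N + 1 : ℕ) : ℝ) * dd N := by
      rw [hL1]; exact habs_le_L t ht
    have h2 := key (dd N) (hdd0 N) (N + 1) t h1
    have h3 : (N + 1 + 2) = (N + 1 + 1) + 1 := by omega
    rw [h3, Function.iterate_succ_apply' (f := TT g t₀ c (dd N)) (n := N + 1 + 1)] at h2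
    exact h2
  -- primitive of m
  set Φ : ℝ → ℝ := fun u => ∫ s in t₀..u, m s with hΦdef
  have hΦc : Continuous Φ := intervalIntegral.continuous_primitive (intervalIntegrable_m hm) t₀
  have hΦdiff : ∀ u v : ℝ, ∫ s in u..v, m s = Φ v - Φ u := by
    intro u v
    exact (intervalIntegral.integral_interval_sub_left (intervalIntegrable_m hm t₀ v)
      (intervalIntegrable_m hm t₀ u)).symm
  -- modulus of continuity of the approximations
  have hzdiff : ∀ N u v, u ∈ Icc a b → v ∈ Icc a b →
      |z N v - z N u| ≤ |Φ (rho t₀ (dd N) v) - Φ (rho t₀ (dd N) u)| := by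
    intro N u v hu hv
    have h1 := hzeq N u hu
    have h2 := hzeq N v hv
    have hGi := hGint (z N) (hzc N)
    have hdiff : z N v - z N u = ∫ s in rho t₀ (dd N) u..rho t₀ (dd N) v, g s (z N s) := by
      rw [h1, h2, add_sub_add_left_eq_sub]
      exact intervalIntegral.integral_interval_sub_left (hGi t₀ _) (hGi t₀ _)
    rw [hdiff, ← hΦdiff]
    exact abs_integral_le_abs_integral (hGi _ _) (intervalIntegrable_m hm _ _)
      (fun s => hdomg s _)
  have hρIcc : ∀ d t, 0 ≤ d → t ∈ Icc a b → rho t₀ d t ∈ Icc a b := by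
    intro d t hd ht
    exact hsubIcc ht₀' ht (rho_mem hd)
  -- uniform bound
  set M : ℝ := ∫ s in a..b, m s with hMdef
  have hMb : ∀ u v : ℝ, u ∈ Icc a b → v ∈ Icc a b → |∫ s in u..v, m s| ≤ M := by
    have key2 : ∀ u v : ℝ, u ∈ Icc a b → v ∈ Icc a b → u ≤ v → ∫ s in u..v, m s ≤ M := by
      intro u v hu hv huv
      have e1 : (∫ s in a..u, m s) + ∫ s in u..v, m s = ∫ s in a..v, m s :=
        intervalIntegral.integral_add_adjacent_intervals (intervalIntegrable_m hm a u)
          (intervalIntegrable_m hm u v)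
      have e2 : (∫ s in a..v, m s) + ∫ s in v..b, m s = ∫ s in a..b, m s :=
        intervalIntegral.integral_add_adjacent_intervals (intervalIntegrable_m hm a v)
          (intervalIntegrable_m hm v b)
      have n1 : 0 ≤ ∫ s in a..u, m s := intervalIntegral.integral_nonneg hu.1 (fun s _ => hm0 s)
      have n2 : 0 ≤ ∫ s in v..b, m s := intervalIntegral.integral_nonneg hv.2 (fun s _ => hm0 s)
      simp only [hMdef]
      linarith
    intro u v hu hv
    rcases le_total u v with h | h
    · rw [abs_of_nonneg (intervalIntegral.integral_nonneg h (fun s _ => hm0 s))]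
      exact key2 u v hu hv h
    · rw [intervalIntegral.integral_symm v u, abs_neg,
        abs_of_nonneg (intervalIntegral.integral_nonneg h (fun s _ => hm0 s))]
      exact key2 v u hv hu h
  have hbd : ∀ N, ∀ t ∈ Icc a b, z N t ∈ Icc (c - M) (c + M) := by
    intro N t ht
    have h2 := hzeq N t ht
    have hρt : rho t₀ (dd N) t ∈ Icc a b := hρIcc _ _ (hdd0 N) ht
    have h3 : |z N t - c| ≤ |∫ s in t₀..rho t₀ (dd N) t, m s| := by
      rw [h2, add_sub_cancel_left]
      exact abs_integral_le_abs_integral (hGint (z N) (hzc N) _ _)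
        (intervalIntegrable_m hm _ _) (fun s => hdomg s _)
    have h4 := h3.trans (hMb t₀ _ ht₀' hρt)
    have h5 := abs_le.1 h4
    exact ⟨by linarith [h5.1], by linarith [h5.2]⟩
  -- bundle into bounded continuous functions on the compact interval
  haveI : CompactSpace (Icc a b) := isCompact_iff_compactSpace.mp isCompact_Icc
  set zb : ℕ → BoundedContinuousFunction (Icc a b) ℝ := fun N =>
    BoundedContinuousFunction.mkOfCompact ⟨fun p => z N p, (hzc N).comp continuous_subtype_val⟩
    with hzbdef
  have hzb_apply : ∀ N (p : Icc a b), zb N p = z N p := fun N p => rfl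
  -- equicontinuity
  have hEq : Equicontinuous ((↑) : (Set.range zb) → (Icc a b) → ℝ) := by
    intro p
    rw [Metric.equicontinuousAt_iff]
    intro ε hε
    obtain ⟨δ, hδ0, hδ⟩ := Metric.uniformContinuousOn_iff.1
      (isCompact_Icc.uniformContinuousOn_of_continuous hΦc.continuousOn) ε hε
    refine ⟨δ, hδ0, fun q hq i => ?_⟩
    obtain ⟨i, N, rfl⟩ := i
    have hq' : dist (q : ℝ) (p : ℝ) < δ := by rwa [← Subtype.dist_eq]
    have hd1 : dist (rho t₀ (dd N) (q : ℝ)) (rho t₀ (dd N) (p : ℝ)) < δ := by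
      rw [Real.dist_eq]
      exact lt_of_le_of_lt (rho_lip (hdd0 N)) (by rwa [← Real.dist_eq])
    have hd2 := hδ _ (hρIcc _ _ (hdd0 N) p.2) _ (hρIcc _ _ (hdd0 N) q.2) (by rwa [dist_comm] at hd1)
    have hd3 := hzdiff N q p q.2 p.2
    show dist (zb N p) (zb N q) < ε
    calc dist (zb N p) (zb N q) = |z N p - z N q| := by rw [hzb_apply, hzb_apply, Real.dist_eq]
      _ ≤ |Φ (rho t₀ (dd N) (p:ℝ)) - Φ (rho t₀ (dd N) (q:ℝ))| := hd3
      _ = dist (Φ (rho t₀ (dd N) (p:ℝ))) (Φ (rho t₀ (dd N) (q:ℝ))) := (Real.dist_eq _ _).symm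
      _ < ε := hd2
  -- Arzelà–Ascoli
  have hAA : IsCompact (closure (Set.range zb)) := by
    refine BoundedContinuousFunction.arzela_ascoli (Icc (c - M) (c + M)) isCompact_Icc _ ?_ hEq
    rintro f p ⟨N, rfl⟩
    exact hbd N p p.2
  obtain ⟨w, -, φ, hφmono, hφconv⟩ :=
    hAA.tendsto_subseq (fun N => subset_closure (mem_range_self N))
  have hpt : ∀ p : Icc a b, Tendsto (fun n => z (φ n) (p : ℝ)) atTop (𝓝 (w p)) := by
    intro p
    have h1 : Tendsto (fun n => dist ((zb (φ n)) p) (w p)) atTop (𝓝 0) := by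
      refine squeeze_zero (fun n => dist_nonneg)
        (fun n => BoundedContinuousFunction.dist_coe_le_dist p) ?_
      rw [← tendsto_iff_dist_tendsto_zero] at *
      exact hφconv
    have h2 := tendsto_iff_dist_tendsto_zero.2 h1
    exact h2
  -- the limit function
  have hproj : ∀ t : ℝ, max a (min b t) ∈ Icc a b := fun t =>
    ⟨le_max_left _ _, max_le hab (min_le_left _ _)⟩
  set Z : ℝ → ℝ := fun t => w ⟨max a (min b t), hproj t⟩ with hZdef
  have hZc : Continuous Z := by
    apply w.continuous.comp
    exact Continuous.subtype_mk (continuous_const.max (continuous_const.min continuous_id)) _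
  have hZeqw : ∀ t (ht : t ∈ Icc a b), Z t = w ⟨t, ht⟩ := by
    intro t ht
    have he : max a (min b t) = t := by rw [min_eq_right ht.2, max_eq_right ht.1]
    simp only [hZdef]
    congr 1
    exact Subtype.ext he
  have hZpt : ∀ t (ht : t ∈ Icc a b), Tendsto (fun n => z (φ n) t) atTop (𝓝 (Z t)) := by
    intro t ht
    rw [hZeqw t ht]
    exact hpt ⟨t, ht⟩
  refine ⟨Z, hZc, ?_⟩
  intro t ht
  -- convergence of the delays
  have hdφ : Tendsto (fun n => dd (φ n)) atTop (𝓝 0) := by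
    have hlim : Tendsto (fun n : ℕ => L / ((n : ℝ) + 1)) atTop (𝓝 0) := by
      have h0 := (tendsto_const_div_atTop_nhds_zero_nat L).comp (tendsto_add_atTop_nat 1)
      refine h0.congr fun n => ?_
      simp only [Function.comp_apply]
      push_cast
      try ring
    refine squeeze_zero (fun n => hdd0 _) (fun n => ?_) hlim
    simp only [hdd]
    apply div_le_div_of_nonneg_left hL0 (by positivity)
    have hn : n ≤ φ n := hφmono.le_apply
    push_cast
    exact_mod_cast (by linarith [(Nat.cast_le.2 hn : (n:ℝ) ≤ (φ n : ℝ))] : (n:ℝ) + 1 ≤ (φ n : ℝ) + 1)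
  have hρconv : Tendsto (fun n => rho t₀ (dd (φ n)) t) atTop (𝓝 t) := by
    rw [tendsto_iff_dist_tendsto_zero]
    refine squeeze_zero (fun n => dist_nonneg) (fun n => ?_) hdφ
    rw [Real.dist_eq]
    exact rho_near (hdd0 _)
  have hterm2 : Tendsto (fun n => ∫ s in rho t₀ (dd (φ n)) t..t, g s (z (φ n) s))
      atTop (𝓝 0) := by
    have hb1 : ∀ n, ‖∫ s in rho t₀ (dd (φ n)) t..t, g s (z (φ n) s)‖ ≤
        |Φ t - Φ (rho t₀ (dd (φ n)) t)| := by
      intro n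
      rw [Real.norm_eq_abs]
      calc |∫ s in rho t₀ (dd (φ n)) t..t, g s (z (φ n) s)|
          ≤ |∫ s in rho t₀ (dd (φ n)) t..t, m s| :=
            abs_integral_le_abs_integral (hGint (z (φ n)) (hzc _) _ _)
              (intervalIntegrable_m hm _ _) (fun s => hdomg s _)
        _ = |Φ t - Φ (rho t₀ (dd (φ n)) t)| := by rw [hΦdiff]
    have hb2 : Tendsto (fun n => |Φ t - Φ (rho t₀ (dd (φ n)) t)|) atTop (𝓝 0) := by
      have h5 : Tendsto (fun n => Φ (rho t₀ (dd (φ n)) t)) atTop (𝓝 (Φ t)) :=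
        (hΦc.tendsto t).comp hρconv
      have h6 : Tendsto (fun n => |Φ t - Φ (rho t₀ (dd (φ n)) t)|) atTop (𝓝 |Φ t - Φ t|) :=
        (continuous_abs.tendsto _).comp (tendsto_const_nhds.sub h5)
      simpa using h6
    exact squeeze_zero_norm hb1 hb2
  have hsub2 : uIcc t₀ t ⊆ Icc a b := hsubIcc ht₀' ht
  have hterm1 : Tendsto (fun n => ∫ s in t₀..t, g s (z (φ n) s)) atTop
      (𝓝 (∫ s in t₀..t, g s (Z s))) := by
    apply intervalIntegral.tendsto_integral_filter_of_dominated_convergence m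
    · exact Eventually.of_forall fun n =>
        ((hGmeas (z (φ n)) (hzc _)).aestronglyMeasurable).restrict
    · exact Eventually.of_forall fun n => ae_of_all _ fun s _ => by
        simpa [Real.norm_eq_abs] using hdomg s (z (φ n) s)
    · exact intervalIntegrable_m hm t₀ t
    · refine ae_of_all _ fun s hs => ?_
      have hsmem : s ∈ Icc a b := hsub2 (Ioc_subset_Icc_self hs)
      exact ((hgcont s).tendsto (Z s)).comp (hZpt s hsmem)
  have hrepr : ∀ n, z (φ n) t = c + ((∫ s in t₀..t, g s (z (φ n) s)) -
      ∫ s in rho t₀ (dd (φ n)) t..t, g s (z (φ n) s)) := by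
    intro n
    rw [hzeq (φ n) t ht]
    congr 1
    rw [eq_sub_iff_add_eq]
    exact intervalIntegral.integral_add_adjacent_intervals
      (hGint (z (φ n)) (hzc _) t₀ _) (hGint (z (φ n)) (hzc _) _ t)
  have hfinal : Tendsto (fun n => z (φ n) t) atTop
      (𝓝 (c + ((∫ s in t₀..t, g s (Z s)) - 0))) :=
    (tendsto_const_nhds.add (hterm1.sub hterm2)).congr fun n => (hrepr n).symm
  have huniq := tendsto_nhds_unique (hZpt t ht) hfinal
  rw [huniq]
  ring



/-- Bootstrap: a function satisfying the integral equation is continuous and the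
integrand is integrable. -/
lemma bootstrap (f : ℝ → ℝ → ℝ) (m : ℝ → ℝ) (t₀ x₀ a b : ℝ)
    (hfum : Measurable (Function.uncurry f))
    (hm : LocallyIntegrable m volume)
    (hdom : ∀ t y, |f t y| ≤ m t)
    (ht₀ : t₀ ∈ Icc a b)
    (x : ℝ → ℝ)
    (hx : ∀ t ∈ Icc a b, x t = x₀ + ∫ s in t₀..t, f s (x s)) :
    ContinuousOn x (Icc a b) ∧ AEMeasurable x (volume.restrict (Icc a b)) ∧
      ∀ u ∈ Icc a b, ∀ v ∈ Icc a b,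
        IntervalIntegrable (fun s => f s (x s)) volume u v := by
  obtain ⟨ha, hb⟩ := ht₀
  have hab : a ≤ b := ha.trans hb
  have hsubIcc : ∀ {u v : ℝ}, u ∈ Icc a b → v ∈ Icc a b → uIcc u v ⊆ Icc a b := by
    intro u v hu hv
    rw [← uIcc_of_le hab]
    exact uIcc_subset_uIcc (by rwa [uIcc_of_le hab]) (by rwa [uIcc_of_le hab])
  set F : ℝ → ℝ := fun s => f s (x s) with hFdef
  set A : Set ℝ := {t | IntervalIntegrable F volume t₀ t} with hAdef
  have hAsub : ∀ t ∈ A, uIcc t₀ t ⊆ A := by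
    intro t ht u hu
    exact ht.mono_set (uIcc_subset_uIcc left_mem_uIcc hu)
  have hOrd : A.OrdConnected := by
    constructor
    intro u hu v hv w hw
    rcases le_total w t₀ with h | h
    · exact hAsub u hu (by rw [mem_uIcc]; right; exact ⟨hw.1, h⟩)
    · exact hAsub v hv (by rw [mem_uIcc]; left; exact ⟨h, hw.2⟩)
  have hAmeas : MeasurableSet A := hOrd.measurableSet
  have hΦc : Continuous (fun u => ∫ s in t₀..u, m s) :=
    intervalIntegral.continuous_primitive (intervalIntegrable_m hm) t₀
  have hest : ∀ u ∈ A ∩ Icc a b, ∀ v ∈ A ∩ Icc a b,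
      |x v - x u| ≤ |(∫ s in t₀..v, m s) - ∫ s in t₀..u, m s| := by
    intro u hu v hv
    have h1 := hx u hu.2
    have h2 := hx v hv.2
    have hiu : IntervalIntegrable F volume t₀ u := hu.1
    have hiv : IntervalIntegrable F volume t₀ v := hv.1
    have hFuv : IntervalIntegrable F volume u v := hiu.symm.trans hiv
    have hdiff : x v - x u = ∫ s in u..v, F s := by
      rw [h1, h2, add_sub_add_left_eq_sub]
      exact intervalIntegral.integral_interval_sub_left hiv hiu
    have hmd : (∫ s in u..v, m s) = (∫ s in t₀..v, m s) - ∫ s in t₀..u, m s :=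
      (intervalIntegral.integral_interval_sub_left (intervalIntegrable_m hm t₀ v)
        (intervalIntegrable_m hm t₀ u)).symm
    rw [hdiff, ← hmd]
    exact abs_integral_le_abs_integral hFuv (intervalIntegrable_m hm u v)
      (fun s => hdom s (x s))
  have hcontA : ContinuousOn x (A ∩ Icc a b) := by
    intro u hu
    rw [Metric.continuousWithinAt_iff]
    intro ε hε
    obtain ⟨δ, hδ0, hδ⟩ := Metric.continuous_iff.1 hΦc u ε hε
    refine ⟨δ, hδ0, fun {v} hv hdist => ?_⟩
    calc dist (x v) (x u) = |x v - x u| := Real.dist_eq _ _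
      _ ≤ |(∫ s in t₀..v, m s) - ∫ s in t₀..u, m s| := hest u hu v hv
      _ = dist (∫ s in t₀..v, m s) (∫ s in t₀..u, m s) := (Real.dist_eq _ _).symm
      _ < ε := hδ v hdist
  have hxoff : ∀ t, t ∈ Icc a b \ A → x t = x₀ := by
    intro t ht
    rw [hx t ht.1, intervalIntegral.integral_undef (by exact ht.2)]
    simp
  have hxm : AEMeasurable x (volume.restrict (Icc a b)) := by
    have hsplit : Icc a b = (Icc a b ∩ A) ∪ (Icc a b \ A) := (inter_union_diff _ _).symm
    have hdisj : Disjoint (Icc a b ∩ A) (Icc a b \ A) :=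
      Disjoint.mono_left inter_subset_right disjoint_sdiff_self_right
    rw [hsplit, Measure.restrict_union hdisj (measurableSet_Icc.diff hAmeas)]
    rw [aemeasurable_add_measure_iff]
    constructor
    · exact (hcontA.mono (by rw [inter_comm]) : ContinuousOn x (Icc a b ∩ A)).aemeasurable
        (measurableSet_Icc.inter hAmeas)
    · refine AEMeasurable.congr (aemeasurable_const (b := x₀)) ?_
      exact (ae_restrict_iff' (measurableSet_Icc.diff hAmeas)).2
        (ae_of_all _ fun t ht => (hxoff t ht).symm)
  have hFaem : AEMeasurable F (volume.restrict (Icc a b)) := by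
    have h1 : AEMeasurable (fun s => (s, x s)) (volume.restrict (Icc a b)) :=
      aemeasurable_id.prodMk hxm
    exact hfum.comp_aemeasurable h1
  have hsubA : Icc a b ⊆ A := fun t htm =>
    intervalIntegrable_of_bound hm (hsubIcc ⟨ha, hb⟩ htm) hFaem (fun s => hdom s (x s))
  refine ⟨hcontA.mono (fun t ht => ⟨hsubA ht, ht⟩), hxm, fun u hu v hv =>
    intervalIntegrable_of_bound hm (hsubIcc hu hv) hFaem (fun s => hdom s (x s))⟩

/-- Fubini + continuity: upgrade the planar a.e. inequality. -/
lemma ae_forall_ineq {f g : ℝ → ℝ → ℝ} (hcf : ∀ t, Continuous (f t))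
    (hcg : ∀ t, Continuous (g t)) {t₀ : ℝ}
    (h : ∀ᵐ p : ℝ × ℝ, (p.1 - t₀) * f p.1 p.2 ≤ (p.1 - t₀) * g p.1 p.2) :
    ∀ᵐ t : ℝ, ∀ y, (t - t₀) * f t y ≤ (t - t₀) * g t y := by
  rw [MeasureTheory.Measure.volume_eq_prod] at h
  have h2 := MeasureTheory.Measure.ae_ae_of_ae_prod h
  filter_upwards [h2] with t ht
  exact le_of_ae_le (continuous_const.mul (hcf t)) (continuous_const.mul (hcg t)) ht

end Stmt11

open Filter Topology

/-- Comparison lemma for Carathéodory ODEs: f, f̃ satisfy the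
Carathéodory conditions (measurable in t, continuous in x, dominated by a locally
integrable m). If x is a Carathéodory solution of `x' = f(t,x)`, `x t₀ = x₀`, x̃ is
the maximal Carathéodory solution of `x̃' = f̃(t,x̃)`, `x̃ t₀ = x̃₀`, with `x₀ ≤ x̃₀`,
and `(t − t₀) f(t,x) ≤ (t − t₀) f̃(t,x)` a.e. in ℝ², then `x t ≤ x̃ t` on the common
interval of existence. -/
theorem stmt_11 (f ftilde : ℝ → ℝ → ℝ) (m : ℝ → ℝ)
    (hmeas : ∀ x : ℝ, Measurable (fun t => f t x))
    (hmeas' : ∀ x : ℝ, Measurable (fun t => ftilde t x))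
    (hcont : ∀ t : ℝ, Continuous (f t))
    (hcont' : ∀ t : ℝ, Continuous (ftilde t))
    (hm : LocallyIntegrable m volume)
    (hdom : ∀ t x : ℝ, |f t x| ≤ m t)
    (hdom' : ∀ t x : ℝ, |ftilde t x| ≤ m t)
    (t₀ x₀ xt₀ : ℝ) (hx₀ : x₀ ≤ xt₀)
    (a b : ℝ) (ht₀ : t₀ ∈ Icc a b)
    (x xtilde : ℝ → ℝ)
    -- x is a Carathéodory solution of x' = f(t,x), x(t₀) = x₀ on [a,b]
    (hx : ∀ t ∈ Icc a b, x t = x₀ + ∫ s in t₀..t, f s (x s))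
    -- x̃ is a Carathéodory solution of x̃' = f̃(t,x̃), x̃(t₀) = x̃₀ on [a,b]
    (hxt : ∀ t ∈ Icc a b, xtilde t = xt₀ + ∫ s in t₀..t, ftilde s (xtilde s))
    -- x̃ is the maximal such solution
    (hmax : ∀ z : ℝ → ℝ, (∀ t ∈ Icc a b, z t = xt₀ + ∫ s in t₀..t, ftilde s (z s)) →
      ∀ t ∈ Icc a b, z t ≤ xtilde t)
    -- (t − t₀) f(t,x) ≤ (t − t₀) f̃(t,x) a.e. in ℝ²
    (hineq : ∀ᵐ p : ℝ × ℝ, (p.1 - t₀) * f p.1 p.2 ≤ (p.1 - t₀) * ftilde p.1 p.2) :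
    ∀ t ∈ Icc a b, x t ≤ xtilde t := by
  have hab : a ≤ b := ht₀.1.trans ht₀.2
  have hsubIcc : ∀ {u v : ℝ}, u ∈ Icc a b → v ∈ Icc a b → uIcc u v ⊆ Icc a b := by
    intro u v hu hv
    rw [← uIcc_of_le hab]
    exact uIcc_subset_uIcc (by rwa [uIcc_of_le hab]) (by rwa [uIcc_of_le hab])
  have hfum := Stmt11.meas_uncurry hmeas hcont
  have hfum' := Stmt11.meas_uncurry hmeas' hcont'
  obtain ⟨hxc, hxm, hxii⟩ := Stmt11.bootstrap f m t₀ x₀ a b hfum hm hdom ht₀ x hx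
  have hproj : ∀ t : ℝ, max a (min b t) ∈ Icc a b := fun t =>
    ⟨le_max_left _ _, max_le hab (min_le_left _ _)⟩
  set x' : ℝ → ℝ := fun t => x (max a (min b t)) with hx'def
  have hx'c : Continuous x' :=
    hxc.comp_continuous (continuous_const.max (continuous_const.min continuous_id)) hproj
  have hx'eq : ∀ t ∈ Icc a b, x' t = x t := by
    intro t ht
    simp only [hx'def]
    rw [min_eq_right ht.2, max_eq_right ht.1]
  set g : ℝ → ℝ → ℝ := fun t y => ftilde t (max y (x' t)) with hgdef
  have hgmeas : Measurable (Function.uncurry g) := by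
    have h1 : Measurable (fun p : ℝ × ℝ => (p.1, max p.2 (x' p.1))) :=
      measurable_fst.prodMk (measurable_snd.max (hx'c.measurable.comp measurable_fst))
    exact hfum'.comp h1
  have hgcont : ∀ t, Continuous (g t) := fun t =>
    (hcont' t).comp (continuous_id.max continuous_const)
  have hgdom : ∀ t y, |g t y| ≤ m t := fun t y => hdom' t _
  obtain ⟨Z, hZc, hZeq⟩ := Stmt11.exists_solution g m t₀ a b xt₀ hgmeas hgcont hm hgdom ht₀
  have hineqae := Stmt11.ae_forall_ineq hcont hcont' hineq
  have hGZmeas : Measurable (fun s => g s (Z s)) :=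
    hgmeas.comp (measurable_id.prodMk hZc.measurable)
  have hGZint : ∀ u v : ℝ, IntervalIntegrable (fun s => g s (Z s)) volume u v := by
    intro u v
    refine IntegrableOn.intervalIntegrable (Integrable.mono' (hm.integrableOn_isCompact isCompact_uIcc)
      hGZmeas.aestronglyMeasurable ?_)
    exact ae_of_all _ fun s => by simpa [Real.norm_eq_abs] using hgdom s (Z s)
  have hFXint : ∀ u ∈ Icc a b, ∀ v ∈ Icc a b,
      IntervalIntegrable (fun s => ftilde s (x s)) volume u v := by
    intro u hu v hv
    refine Stmt11.intervalIntegrable_of_bound hm (hsubIcc hu hv) ?_ (fun s => hdom' s (x s))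
    exact hfum'.comp_aemeasurable (aemeasurable_id.prodMk hxm)
  have hZt₀ : Z t₀ = xt₀ := by rw [hZeq t₀ ht₀]; simp
  have hxt₀v : x t₀ = x₀ := by rw [hx t₀ ht₀]; simp
  have hne_ae : ∀ r : ℝ, ∀ᵐ s : ℝ, s ≠ r := by
    intro r
    rw [ae_iff]
    have he : {s : ℝ | ¬s ≠ r} = {r} := by ext s; simp
    rw [he]
    exact measure_singleton r
  -- invariance: x ≤ Z on [a,b]
  have hxZ : ∀ t ∈ Icc a b, x t ≤ Z t := by
    by_contra hcon
    push_neg at hcon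
    obtain ⟨t₁, ht₁, hlt⟩ := hcon
    rcases le_or_gt t₀ t₁ with hct | hct
    · -- right side
      set D : Set ℝ := {t | t ∈ Icc t₀ t₁ ∧ x t ≤ Z t} with hDdef
      have hD0 : t₀ ∈ D := ⟨⟨le_rfl, hct⟩, by rw [hxt₀v, hZt₀]; exact hx₀⟩
      have hDbdd : BddAbove D := ⟨t₁, fun s hs => hs.1.2⟩
      have hDne : D.Nonempty := ⟨t₀, hD0⟩
      set τ : ℝ := sSup D with hτdef
      have hτmem : τ ∈ Icc t₀ t₁ := ⟨le_csSup hDbdd hD0, csSup_le hDne fun s hs => hs.1.2⟩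
      have hIccsub : Icc t₀ t₁ ⊆ Icc a b := fun s hs => ⟨ht₀.1.trans hs.1, hs.2.trans ht₁.2⟩
      have hτab : τ ∈ Icc a b := hIccsub hτmem
      have hxτ : x τ ≤ Z τ := by
        obtain ⟨u, humono, hulim, humem⟩ := exists_seq_tendsto_sSup hDne hDbdd
        have h2 : Tendsto u atTop (𝓝[Icc a b] τ) :=
          tendsto_nhdsWithin_of_tendsto_nhds_of_eventually_within u hulim
            (Eventually.of_forall fun n => hIccsub (humem n).1)
        have hxlim : Tendsto (fun n => x (u n)) atTop (𝓝 (x τ)) :=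
          ((hxc τ hτab).tendsto).comp h2
        have hZlim : Tendsto (fun n => Z (u n)) atTop (𝓝 (Z τ)) := (hZc.tendsto τ).comp hulim
        exact le_of_tendsto_of_tendsto' hxlim hZlim fun n => (humem n).2
      have hτlt : τ < t₁ := by
        rcases lt_or_eq_of_le hτmem.2 with h | h
        · exact h
        · exfalso; rw [h] at hxτ; linarith
      have hgt : ∀ s, τ < s → s ≤ t₁ → Z s < x s := by
        intro s h1 h2
        by_contra hns
        push_neg at hns
        exact absurd (le_csSup hDbdd ⟨⟨hτmem.1.trans h1.le, h2⟩, hns⟩) (not_le.2 h1)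
      have hZd : Z t₁ - Z τ = ∫ s in τ..t₁, ftilde s (x s) := by
        have h1 : Z t₁ - Z τ = ∫ s in τ..t₁, g s (Z s) := by
          rw [hZeq t₁ ht₁, hZeq τ hτab, add_sub_add_left_eq_sub]
          exact intervalIntegral.integral_interval_sub_left (hGZint t₀ t₁) (hGZint t₀ τ)
        rw [h1]
        apply intervalIntegral.integral_congr_ae
        refine ae_of_all _ fun s hs => ?_
        rw [Set.uIoc_of_le hτlt.le] at hs
        have h2 : Z s < x s := hgt s hs.1 hs.2
        have h3 : s ∈ Icc a b := hIccsub ⟨hτmem.1.trans hs.1.le, hs.2⟩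
        simp only [hgdef]
        rw [hx'eq s h3, max_eq_right h2.le]
      have hxd : x t₁ - x τ = ∫ s in τ..t₁, f s (x s) := by
        rw [hx t₁ ht₁, hx τ hτab, add_sub_add_left_eq_sub]
        exact intervalIntegral.integral_interval_sub_left (hxii t₀ ht₀ t₁ ht₁)
          (hxii t₀ ht₀ τ hτab)
      have hcmp : (∫ s in τ..t₁, f s (x s)) ≤ ∫ s in τ..t₁, ftilde s (x s) := by
        rw [intervalIntegral.integral_of_le hτlt.le, intervalIntegral.integral_of_le hτlt.le]
        apply MeasureTheory.setIntegral_mono_ae_restrict ((hxii τ hτab t₁ ht₁).1)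
          ((hFXint τ hτab t₁ ht₁).1)
        filter_upwards [ae_restrict_mem measurableSet_Ioc, ae_restrict_of_ae hineqae]
          with s hsmem hsineq
        have hpos : 0 < s - t₀ := by
          have h4 := hsmem.1
          have h5 := hτmem.1
          linarith
        exact le_of_mul_le_mul_left (hsineq (x s)) hpos
      linarith
    · -- left side
      set D : Set ℝ := {t | t ∈ Icc t₁ t₀ ∧ x t ≤ Z t} with hDdef
      have hD0 : t₀ ∈ D := ⟨⟨hct.le, le_rfl⟩, by rw [hxt₀v, hZt₀]; exact hx₀⟩
      have hDbdd : BddBelow D := ⟨t₁, fun s hs => hs.1.1⟩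
      have hDne : D.Nonempty := ⟨t₀, hD0⟩
      set τ : ℝ := sInf D with hτdef
      have hτmem : τ ∈ Icc t₁ t₀ := ⟨le_csInf hDne fun s hs => hs.1.1, csInf_le hDbdd hD0⟩
      have hIccsub : Icc t₁ t₀ ⊆ Icc a b := fun s hs => ⟨ht₁.1.trans hs.1, hs.2.trans ht₀.2⟩
      have hτab : τ ∈ Icc a b := hIccsub hτmem
      have hxτ : x τ ≤ Z τ := by
        obtain ⟨u, humono, hulim, humem⟩ := exists_seq_tendsto_sInf hDne hDbdd
        have h2 : Tendsto u atTop (𝓝[Icc a b] τ) :=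
          tendsto_nhdsWithin_of_tendsto_nhds_of_eventually_within u hulim
            (Eventually.of_forall fun n => hIccsub (humem n).1)
        have hxlim : Tendsto (fun n => x (u n)) atTop (𝓝 (x τ)) :=
          ((hxc τ hτab).tendsto).comp h2
        have hZlim : Tendsto (fun n => Z (u n)) atTop (𝓝 (Z τ)) := (hZc.tendsto τ).comp hulim
        exact le_of_tendsto_of_tendsto' hxlim hZlim fun n => (humem n).2
      have hτgt : t₁ < τ := by
        rcases lt_or_eq_of_le hτmem.1 with h | h
        · exact h
        · exfalso; rw [← h] at hxτ; linarith
      have hgt : ∀ s, t₁ ≤ s → s < τ → Z s < x s := by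
        intro s h1 h2
        by_contra hns
        push_neg at hns
        exact absurd (csInf_le hDbdd ⟨⟨h1, h2.le.trans hτmem.2⟩, hns⟩) (not_le.2 h2)
      have hZd : Z τ - Z t₁ = ∫ s in t₁..τ, ftilde s (x s) := by
        have h1 : Z τ - Z t₁ = ∫ s in t₁..τ, g s (Z s) := by
          rw [hZeq τ hτab, hZeq t₁ ht₁, add_sub_add_left_eq_sub]
          exact intervalIntegral.integral_interval_sub_left (hGZint t₀ τ) (hGZint t₀ t₁)
        rw [h1]
        apply intervalIntegral.integral_congr_ae
        filter_upwards [hne_ae τ] with s hsne hs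
        rw [Set.uIoc_of_le hτgt.le] at hs
        have hslt : s < τ := lt_of_le_of_ne hs.2 hsne
        have h2 : Z s < x s := hgt s hs.1.le hslt
        have h3 : s ∈ Icc a b := hIccsub ⟨hs.1.le, hs.2.trans hτmem.2⟩
        simp only [hgdef]
        rw [hx'eq s h3, max_eq_right h2.le]
      have hxd : x τ - x t₁ = ∫ s in t₁..τ, f s (x s) := by
        rw [hx τ hτab, hx t₁ ht₁, add_sub_add_left_eq_sub]
        exact intervalIntegral.integral_interval_sub_left (hxii t₀ ht₀ τ hτab)
          (hxii t₀ ht₀ t₁ ht₁)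
      have hcmp : (∫ s in t₁..τ, ftilde s (x s)) ≤ ∫ s in t₁..τ, f s (x s) := by
        rw [intervalIntegral.integral_of_le hτgt.le, intervalIntegral.integral_of_le hτgt.le]
        apply MeasureTheory.setIntegral_mono_ae_restrict ((hFXint t₁ ht₁ τ hτab).1)
          ((hxii t₁ ht₁ τ hτab).1)
        filter_upwards [ae_restrict_mem measurableSet_Ioc, ae_restrict_of_ae hineqae,
          ae_restrict_of_ae (hne_ae t₀)] with s hsmem hsineq hsne
        have hneg : s - t₀ < 0 := by
          have h4 := hsmem.2
          have h5 := hτmem.2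
          rcases lt_or_eq_of_le (h4.trans h5) with h6 | h6
          · linarith
          · exact absurd h6 hsne
        exact (mul_le_mul_left_of_neg hneg).1 (hsineq (x s))
      linarith
  intro t htm
  have hZsol : ∀ t ∈ Icc a b, Z t = xt₀ + ∫ s in t₀..t, ftilde s (Z s) := by
    intro t htm
    rw [hZeq t htm]
    congr 1
    apply intervalIntegral.integral_congr
    intro s hs
    have h3 : s ∈ Icc a b := hsubIcc ht₀ htm hs
    simp only [hgdef]
    rw [hx'eq s h3, max_eq_left (hxZ s h3)]
  exact (hxZ t htm).trans (hmax Z hZsol t htm)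
end
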